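/- Take G = 5 and p₀ = 2, so the dictionary D₂ ⊆ ℝ⁵ consists of e₁,…,e₅ together with the normalized width-2 pulses (e_i+e_{i+1})/√2 for i = 1,2,3,4. Then the vectors γ₃ = (1,1,1,1,0)ᵀ and γ₄ = (1,1,0,1,1)ᵀ have equal sparse-representation cost over D₂: the minimum of ‖α‖₁ over nonnegative α with Dα = γ₃ equals 2√2, and likewise the minimum for γ₄ equals 2√2. (This shows p₀ = 2 is ineffective at distinguishing group sizes larger than 2.) -/

import Mathlib

open Finset

/-- `1/√2`, the height of a normalized width-2 discrete rectangular pulse. -/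
noncomputable def s2 : ℝ := (Real.sqrt 2)⁻¹

/-- The dictionary matrix `D` for `G = 5`, `p₀ = 2`: its nine columns are
`e₁, …, e₅` and the normalized width-2 pulses `(eᵢ+e_{i+1})/√2`, `i = 1,…,4`. -/
noncomputable def D52 : Matrix (Fin 5) (Fin 9) ℝ :=
  Matrix.of fun i j =>
    (![![1,0,0,0,0], ![0,1,0,0,0], ![0,0,1,0,0], ![0,0,0,1,0], ![0,0,0,0,1],
       ![s2,s2,0,0,0], ![0,s2,s2,0,0], ![0,0,s2,s2,0], ![0,0,0,s2,s2]]
      : Fin 9 → Fin 5 → ℝ) j i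

lemma s2_eq : s2 = Real.sqrt 2 / 2 := by
  have hsq : Real.sqrt 2 * Real.sqrt 2 = 2 := Real.mul_self_sqrt (by norm_num)
  have hp : (0:ℝ) < Real.sqrt 2 := Real.sqrt_pos.mpr (by norm_num)
  rw [s2]
  field_simp
  rw [sq, hsq]

lemma sum9 (α : Fin 9 → ℝ) :
    ∑ j, α j = α 0 + α 1 + α 2 + α 3 + α 4 + α 5 + α 6 + α 7 + α 8 := by
  norm_num [Fin.sum_univ_succ, Fin.succ]; ring_nf; rfl

set_option maxHeartbeats 1000000 in
/-- Over the dictionary `D₂` (for `G = 5`, `p₀ = 2`), the vectors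
`γ₃ = (1,1,1,1,0)ᵀ` and `γ₄ = (1,1,0,1,1)ᵀ` have equal sparse-representation cost `2√2`:
`p₀ = 2` cannot distinguish group sizes larger than `2`. -/
theorem stmt_12 :
    IsLeast {r : ℝ | ∃ α : Fin 9 → ℝ, (∀ j, 0 ≤ α j)
        ∧ D52.mulVec α = ![1, 1, 1, 1, 0] ∧ r = ∑ j, α j} (2 * Real.sqrt 2)
    ∧ IsLeast {r : ℝ | ∃ α : Fin 9 → ℝ, (∀ j, 0 ≤ α j)
        ∧ D52.mulVec α = ![1, 1, 0, 1, 1] ∧ r = ∑ j, α j} (2 * Real.sqrt 2) := by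
  have hsq : Real.sqrt 2 * Real.sqrt 2 = 2 := Real.mul_self_sqrt (by norm_num)
  have h2 : (1:ℝ) < Real.sqrt 2 := by nlinarith [Real.sqrt_nonneg 2]
  have hs2c : Real.sqrt 2 / 2 ≤ 1 := by nlinarith [Real.sqrt_nonneg 2]
  have hnn : (0:ℝ) ≤ Real.sqrt 2 := Real.sqrt_nonneg 2
  constructor
  · constructor
    · refine ⟨![0,0,0,0,0, Real.sqrt 2, 0, Real.sqrt 2, 0], ?_, ?_, ?_⟩
      · intro j; fin_cases j <;> first | exact le_rfl | exact Real.sqrt_nonneg 2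
      · funext i
        rw [Matrix.mulVec, dotProduct]
        fin_cases i <;> norm_num [D52, s2, Fin.sum_univ_succ, Fin.succ]
      · rw [sum9]
        show (2*Real.sqrt 2 : ℝ) = 0+0+0+0+0+Real.sqrt 2+0+Real.sqrt 2+0
        ring
    · rintro r ⟨α, hpos, heq, rfl⟩
      have e0 : α 0 + s2 * α 5 = 1 := by
        simpa [D52, Matrix.mulVec, dotProduct, Fin.sum_univ_succ, Fin.succ,
          show ((⟨5, by omega⟩ : Fin 9) = 5) from rfl] using congrFun heq 0
      have e1 : α 1 + (s2 * α 5 + s2 * α 6) = 1 := by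
        simpa [D52, Matrix.mulVec, dotProduct, Fin.sum_univ_succ, Fin.succ,
          show ((⟨5, by omega⟩ : Fin 9) = 5) from rfl,
          show ((⟨6, by omega⟩ : Fin 9) = 6) from rfl] using congrFun heq 1
      have e2 : α 2 + (s2 * α 6 + s2 * α 7) = 1 := by
        simpa [D52, Matrix.mulVec, dotProduct, Fin.sum_univ_succ, Fin.succ,
          show ((⟨2, by omega⟩ : Fin 9) = 2) from rfl,
          show ((⟨6, by omega⟩ : Fin 9) = 6) from rfl,
          show ((⟨7, by omega⟩ : Fin 9) = 7) from rfl] using congrFun heq 2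
      have e3 : α 3 + (s2 * α 7 + s2 * α 8) = 1 := by
        simpa [D52, Matrix.mulVec, dotProduct, Fin.sum_univ_succ, Fin.succ,
          show ((⟨3, by omega⟩ : Fin 9) = 3) from rfl,
          show ((⟨7, by omega⟩ : Fin 9) = 7) from rfl,
          show ((⟨8, by omega⟩ : Fin 9) = 8) from rfl] using congrFun heq 3
      rw [s2_eq] at e0 e1 e2 e3
      rw [sum9]
      have hkey : Real.sqrt 2 / 2 * (α 0 + α 1 + α 2 + α 3)
          + (α 5 + α 6 + α 7 + α 8 / 2) = 2 * Real.sqrt 2 := by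
        linear_combination (Real.sqrt 2 / 2) * e0 + (Real.sqrt 2 / 2) * e1
          + (Real.sqrt 2 / 2) * e2 + (Real.sqrt 2 / 2) * e3
          - ((2 * α 5 + 2 * α 6 + 2 * α 7 + α 8) / 4) * hsq
      nlinarith [hpos 0, hpos 1, hpos 2, hpos 3, hpos 4, hpos 5, hpos 6, hpos 7, hpos 8,
        mul_nonneg (by linarith : (0:ℝ) ≤ 1 - Real.sqrt 2 / 2) (hpos 0),
        mul_nonneg (by linarith : (0:ℝ) ≤ 1 - Real.sqrt 2 / 2) (hpos 1),
        mul_nonneg (by linarith : (0:ℝ) ≤ 1 - Real.sqrt 2 / 2) (hpos 2),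
        mul_nonneg (by linarith : (0:ℝ) ≤ 1 - Real.sqrt 2 / 2) (hpos 3)]
  · constructor
    · refine ⟨![0,0,0,0,0, Real.sqrt 2, 0, 0, Real.sqrt 2], ?_, ?_, ?_⟩
      · intro j; fin_cases j <;> first | exact le_rfl | exact Real.sqrt_nonneg 2
      · funext i
        rw [Matrix.mulVec, dotProduct]
        fin_cases i <;> norm_num [D52, s2, Fin.sum_univ_succ, Fin.succ]
      · rw [sum9]
        show (2*Real.sqrt 2 : ℝ) = 0+0+0+0+0+Real.sqrt 2+0+0+Real.sqrt 2
        ring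
    · rintro r ⟨α, hpos, heq, rfl⟩
      have e0 : α 0 + s2 * α 5 = 1 := by
        simpa [D52, Matrix.mulVec, dotProduct, Fin.sum_univ_succ, Fin.succ,
          show ((⟨5, by omega⟩ : Fin 9) = 5) from rfl] using congrFun heq 0
      have e1 : α 1 + (s2 * α 5 + s2 * α 6) = 1 := by
        simpa [D52, Matrix.mulVec, dotProduct, Fin.sum_univ_succ, Fin.succ,
          show ((⟨5, by omega⟩ : Fin 9) = 5) from rfl,
          show ((⟨6, by omega⟩ : Fin 9) = 6) from rfl] using congrFun heq 1
      have e3 : α 3 + (s2 * α 7 + s2 * α 8) = 1 := by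
        simpa [D52, Matrix.mulVec, dotProduct, Fin.sum_univ_succ, Fin.succ,
          show ((⟨3, by omega⟩ : Fin 9) = 3) from rfl,
          show ((⟨7, by omega⟩ : Fin 9) = 7) from rfl,
          show ((⟨8, by omega⟩ : Fin 9) = 8) from rfl] using congrFun heq 3
      have e4 : α 4 + s2 * α 8 = 1 := by
        simpa [D52, Matrix.mulVec, dotProduct, Fin.sum_univ_succ, Fin.succ,
          show ((⟨4, by omega⟩ : Fin 9) = 4) from rfl,
          show ((⟨8, by omega⟩ : Fin 9) = 8) from rfl] using congrFun heq 4
      rw [s2_eq] at e0 e1 e3 e4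
      rw [sum9]
      have hkey : Real.sqrt 2 / 2 * (α 0 + α 1 + α 3 + α 4)
          + (α 5 + α 6 / 2 + α 7 / 2 + α 8) = 2 * Real.sqrt 2 := by
        linear_combination (Real.sqrt 2 / 2) * e0 + (Real.sqrt 2 / 2) * e1
          + (Real.sqrt 2 / 2) * e3 + (Real.sqrt 2 / 2) * e4
          - ((2 * α 5 + α 6 + α 7 + 2 * α 8) / 4) * hsq
      nlinarith [hpos 0, hpos 1, hpos 2, hpos 3, hpos 4, hpos 5, hpos 6, hpos 7, hpos 8,
        mul_nonneg (by linarith : (0:ℝ) ≤ 1 - Real.sqrt 2 / 2) (hpos 0),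
        mul_nonneg (by linarith : (0:ℝ) ≤ 1 - Real.sqrt 2 / 2) (hpos 1),
        mul_nonneg (by linarith : (0:ℝ) ≤ 1 - Real.sqrt 2 / 2) (hpos 3),
        mul_nonneg (by linarith : (0:ℝ) ≤ 1 - Real.sqrt 2 / 2) (hpos 4)]
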